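/- Let G = (V, E) be a digraph in which each edge e carries a real cost c(e) and a positive real time τ(e), let pq ∈ E, and let λ_old, λ_new ∈ ℝ with λ_new ≤ λ_old. Suppose φ : V → ℝ attests λ_old in G − pq (the graph G with the edge pq removed). Define weights on G − pq by w(uv) = c(uv) − λ_new·τ(uv) − φ(u) + φ(v) (these are nonnegative), let d(v) ∈ [0, +∞] be the w-distance from q to v in G − pq (+∞ if v is unreachable from q), let Γ = λ_new·τ(pq) − c(pq) + φ(p) − φ(q), and assume every path from q to p in G − pq has total w-weight at least Γ. Let Δ be the maximum of 0, Γ, and the values d(v) − w(uv) over all edges uv ∈ E \ {pq} with d(u) = +∞ and d(v) < +∞. Define δ(v) = d(v) if d(v) < +∞ and δ(v) = Δ otherwise, and set φ'(v) = φ(v) − δ(v). Then φ' attests λ_new in G. -/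

import Mathlib

/-- A path from `s` to `t` in the digraph with edge set `E`: a finite sequence of edges
in which the head of each edge equals the tail of the next, starting at `s`, ending at `t`
(the empty sequence is a path from `s` to `s`). Paths need not be simple. -/
inductive IsPath {V : Type*} (E : Set (V × V)) : V → V → List (V × V) → Prop
  | nil (s : V) : IsPath E s s []
  | cons {s u t : V} {P : List (V × V)} :
      (s, u) ∈ E → IsPath E u t P → IsPath E s t ((s, u) :: P)

/-- The weight of a path: the sum of its edge weights. -/
def pweight {V : Type*} (w : V × V → ℝ) (P : List (V × V)) : ℝ :=
  (P.map w).sum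

/-- `φ` attests `λ` in the digraph with edge set `E`:
`c(uv) − λ·τ(uv) − φ(u) + φ(v) ≥ 0` for every edge `uv`. -/
def Attests {V : Type*} (E : Set (V × V)) (c τ : V × V → ℝ) (lam : ℝ) (φ : V → ℝ) : Prop :=
  ∀ e ∈ E, 0 ≤ c e - lam * τ e - φ e.1 + φ e.2

/-- `distG E w u v` is the `w`-distance from `u` to `v`
(`+∞` if there is no path from `u` to `v`). -/
noncomputable def distG {V : Type*} (E : Set (V × V)) (w : V × V → ℝ) (u v : V) : EReal :=
  sInf {r : EReal | ∃ P : List (V × V), IsPath E u v P ∧ r = (pweight w P : EReal)}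

lemma isPath_append_edge {V : Type*} {E : Set (V × V)} {s t v : V} {P : List (V × V)}
    (h : IsPath E s t P) (he : (t, v) ∈ E) : IsPath E s v (P ++ [(t, v)]) := by
  induction h with
  | nil s => exact .cons he (.nil v)
  | cons h1 h2 ih => exact .cons h1 (ih he)

lemma pweight_append_edge {V : Type*} (w : V × V → ℝ) (P : List (V × V)) (e : V × V) :
    pweight w (P ++ [e]) = pweight w P + w e := by
  simp [pweight]

lemma pweight_nonneg {V : Type*} {E : Set (V × V)} {w : V × V → ℝ}
    (hw : ∀ e ∈ E, 0 ≤ w e) {s t : V} {P : List (V × V)} (h : IsPath E s t P) :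
    0 ≤ pweight w P := by
  induction h with
  | nil s => simp [pweight]
  | cons h1 h2 ih =>
    have := hw _ h1
    simp only [pweight, List.map_cons, List.sum_cons] at *
    linarith

/-- Updating the potential after inserting the edge `pq`: if `φ` attests `λ_old` in
`G − pq`, `λ_new ≤ λ_old`, `d` is the `w`-distance from `q` in `G − pq` (for
`w(uv) = c(uv) − λ_new·τ(uv) − φ(u) + φ(v)`), every path `q → p` in `G − pq` has
`w`-weight at least `Γ`, and `Δ` is the maximum of `0`, `Γ` and the values
`d(v) − w(uv)` over edges `uv ≠ pq` with `d(u) = +∞` and `d(v) < +∞`, then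
`φ'(v) = φ(v) − δ(v)` (with `δ(v) = d(v)` when finite, `δ(v) = Δ` otherwise)
attests `λ_new` in `G`. -/
theorem stmt11 {V : Type*} [Fintype V]
    (E : Set (V × V)) (c τ : V × V → ℝ)
    (hτ : ∀ e ∈ E, 0 < τ e)
    (p q : V) (hpq : (p, q) ∈ E)
    (lamOld lamNew : ℝ) (hle : lamNew ≤ lamOld)
    (φ : V → ℝ) (hφ : Attests (E \ {(p, q)}) c τ lamOld φ)
    (w : V × V → ℝ) (hw : ∀ e : V × V, w e = c e - lamNew * τ e - φ e.1 + φ e.2)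
    (d : V → EReal) (hd : ∀ v : V, d v = distG (E \ {(p, q)}) w q v)
    (Γ : ℝ) (hΓ : Γ = lamNew * τ (p, q) - c (p, q) + φ p - φ q)
    (hpaths : ∀ P : List (V × V), IsPath (E \ {(p, q)}) q p P → Γ ≤ pweight w P)
    (Δ : ℝ)
    (hΔ : Δ = sSup ({0, Γ} ∪ {x : ℝ | ∃ u v : V, (u, v) ∈ E \ {(p, q)} ∧
      d u = ⊤ ∧ d v ≠ ⊤ ∧ x = (d v).toReal - w (u, v)}))
    (δ : V → ℝ) (hδ : ∀ v : V, δ v = if d v = ⊤ then Δ else (d v).toReal)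
    (φ' : V → ℝ) (hφ' : ∀ v : V, φ' v = φ v - δ v) :
    Attests E c τ lamNew φ' := by
  -- weights are nonnegative on E \ {pq}
  have hwnn : ∀ e ∈ E \ {(p, q)}, 0 ≤ w e := by
    intro e he
    have h1 := hφ e he
    have h2 := hτ e he.1
    have h3 : 0 ≤ (lamOld - lamNew) * τ e := mul_nonneg (by linarith) h2.le
    rw [hw]; nlinarith
  -- distance lower bound
  have hdnn : ∀ v : V, 0 ≤ d v := by
    intro v
    rw [hd]
    apply le_sInf
    rintro r ⟨P, hP, rfl⟩
    exact_mod_cast pweight_nonneg hwnn hP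
  have hdbot : ∀ v : V, d v ≠ ⊥ := by
    intro v h
    have := hdnn v
    rw [h] at this
    simp at this
  -- d q = 0
  have hdq : d q = 0 := by
    refine le_antisymm ?_ (hdnn q)
    rw [hd]
    have : ((0 : ℝ) : EReal) ∈ {r : EReal | ∃ P, IsPath (E \ {(p, q)}) q q P ∧ r = (pweight w P : EReal)} :=
      ⟨[], .nil q, by simp [pweight]⟩
    simpa [distG] using sInf_le this
  -- triangle inequality
  have htri : ∀ u v : V, (u, v) ∈ E \ {(p, q)} → d v ≤ d u + (w (u, v) : EReal) := by
    intro u v he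
    have hsub : d v - (w (u, v) : EReal) ≤ d u := by
      rw [hd u]
      apply le_sInf
      rintro r ⟨P, hP, rfl⟩
      rw [EReal.sub_le_iff_le_add (.inl (EReal.coe_ne_bot _)) (.inl (EReal.coe_ne_top _))]
      have hmem : ((pweight w (P ++ [(u, v)]) : ℝ) : EReal) ∈
          {r : EReal | ∃ P, IsPath (E \ {(p, q)}) q v P ∧ r = (pweight w P : EReal)} :=
        ⟨P ++ [(u, v)], isPath_append_edge hP he, rfl⟩
      have hdvle : d v ≤ ((pweight w (P ++ [(u, v)]) : ℝ) : EReal) := by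
        rw [hd]; exact sInf_le hmem
      calc d v ≤ ((pweight w (P ++ [(u, v)]) : ℝ) : EReal) := hdvle
        _ = (pweight w P : EReal) + (w (u, v) : EReal) := by
            rw [pweight_append_edge]; exact_mod_cast EReal.coe_add _ _
    rwa [EReal.sub_le_iff_le_add (.inl (EReal.coe_ne_bot _)) (.inl (EReal.coe_ne_top _))] at hsub
  -- d p ≥ Γ
  have hdp : (Γ : EReal) ≤ d p := by
    rw [hd]
    apply le_sInf
    rintro r ⟨P, hP, rfl⟩
    exact_mod_cast hpaths P hP
  -- the Δ set is finite, hence bounded above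
  set S : Set ℝ := ({0, Γ} ∪ {x : ℝ | ∃ u v : V, (u, v) ∈ E \ {(p, q)} ∧
      d u = ⊤ ∧ d v ≠ ⊤ ∧ x = (d v).toReal - w (u, v)}) with hS
  have hSfin : S.Finite := by
    apply Set.Finite.union (Set.toFinite _)
    apply Set.Finite.subset (Set.finite_range (fun e : V × V => (d e.2).toReal - w e))
    rintro x ⟨u, v, _, _, _, rfl⟩
    exact ⟨(u, v), rfl⟩
  have hSbdd : BddAbove S := hSfin.bddAbove
  have hΔle : ∀ x ∈ S, x ≤ Δ := fun x hx => hΔ ▸ le_csSup hSbdd hx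
  have hΔ0 : 0 ≤ Δ := hΔle 0 (Or.inl (Or.inl rfl))
  have hΔΓ : Γ ≤ Δ := hΔle Γ (Or.inl (Or.inr rfl))
  -- key inequality: δ v ≤ w (u,v) + δ u for every edge
  intro e he
  obtain ⟨u, v⟩ := e
  have key : δ v ≤ w (u, v) + δ u := by
    by_cases hepq : (u, v) = (p, q)
    · -- the inserted edge
      obtain ⟨rfl, rfl⟩ := Prod.mk.injEq .. ▸ hepq
      have hwpq : w (u, v) = -Γ := by rw [hw, hΓ]; ring
      have hδv : δ v = 0 := by
        rw [hδ, if_neg (by rw [hdq]; exact fun h => by simp at h), hdq]; simp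
      rw [hδv, hwpq, hδ u]
      by_cases hu : d u = ⊤
      · rw [if_pos hu]; linarith
      · rw [if_neg hu]
        have : (Γ : EReal) ≤ ((d u).toReal : EReal) := by
          rwa [EReal.coe_toReal hu (hdbot u)]
        have := EReal.coe_le_coe_iff.1 this
        linarith
    · -- an edge of E \ {pq}
      have he' : (u, v) ∈ E \ {(p, q)} := ⟨he, hepq⟩
      have hwuv := hwnn _ he'
      by_cases hu : d u = ⊤
      · by_cases hv : d v = ⊤
        · rw [hδ, hδ, if_pos hu, if_pos hv]; linarith
        · rw [hδ, hδ, if_pos hu, if_neg hv]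
          have : (d v).toReal - w (u, v) ≤ Δ :=
            hΔle _ (Or.inr ⟨u, v, he', hu, hv, rfl⟩)
          linarith
      · have htri' := htri u v he'
        have hv : d v ≠ ⊤ := by
          intro hv
          rw [hv] at htri'
          have h2 : d u + (w (u, v) : EReal) < ⊤ :=
            EReal.add_lt_top hu (EReal.coe_ne_top _)
          exact absurd htri' (not_le.2 (lt_of_lt_of_le h2 le_top))
        rw [hδ, hδ, if_neg hu, if_neg hv]
        have h1 : ((d v).toReal : EReal) ≤ ((d u).toReal : EReal) + (w (u, v) : EReal) := by
          rw [EReal.coe_toReal hv (hdbot v), EReal.coe_toReal hu (hdbot u)]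
          exact htri'
        have h2 : ((d v).toReal : EReal) ≤ (((d u).toReal + w (u, v) : ℝ) : EReal) := by
          rwa [EReal.coe_add]
        have := EReal.coe_le_coe_iff.1 h2
        linarith
  rw [hφ' u, hφ' v]
  have hweq := hw (u, v)
  simp only at hweq ⊢
  linarith
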